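/- Define FL : ℝ¹² → ℝ¹⁰ by FL(x, t, u, u₁, u₂, u₂₀, u₁₁, u₀₂, u₃₀, u₂₁, u₁₂, u₀₃) := (x, t, u, u₁, u₂, ½u₂ − 3u₁² + u₃₀, ½u₁, −u₂₀, 0, 0) (the restricted Legendre map of the KdV Lagrangian L = ½(u₁u₂ − 2u₁³ − u₂₀²)). Then: (a) the total derivative of FL has rank exactly 7 at every point of ℝ¹²; in particular FL is nowhere a submersion onto ℝ¹⁰, so the KdV Lagrangian is singular; and (b) the image of FL equals the set { (x, t, u, u₁, u₂, p¹, p², p²⁰, p¹¹, p⁰²) ∈ ℝ¹⁰ : p² = ½u₁, p¹¹ = 0, p⁰² = 0 }. -/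

import Mathlib

noncomputable section

/-- The restricted Legendre map of the KdV Lagrangian `L = ½(u₁u₂ − 2u₁³ − u₂₀²)`, in
coordinates `(x, t, u, u₁, u₂, u₂₀, u₁₁, u₀₂, u₃₀, u₂₁, u₁₂, u₀₃) ↦
(x, t, u, u₁, u₂, p¹, p², p²⁰, p¹¹, p⁰²)`. -/
def FLkdv : (Fin 12 → ℝ) → (Fin 10 → ℝ) := fun v =>
  ![v 0, v 1, v 2, v 3, v 4, (1 / 2) * v 4 - 3 * v 3 ^ 2 + v 8, (1 / 2) * v 3,
    -v 5, 0, 0]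

open ContinuousLinearMap in
/-- The (total) derivative of `FLkdv` at `a`. -/
def Dkdv (a : Fin 12 → ℝ) : (Fin 12 → ℝ) →L[ℝ] (Fin 10 → ℝ) :=
  ContinuousLinearMap.pi
    (![proj 0, proj 1, proj 2, proj 3, proj 4,
      (1/2 : ℝ) • proj 4 - (3 : ℝ) • ((a 3) • proj 3 + (a 3) • proj 3) + proj 8,
      (1/2 : ℝ) • proj 3, -proj 5, 0, 0] :
      Fin 10 → (Fin 12 → ℝ) →L[ℝ] ℝ)

theorem hasFDerivAt_FLkdv (a : Fin 12 → ℝ) : HasFDerivAt FLkdv (Dkdv a) a := by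
  rw [hasFDerivAt_pi']
  intro i
  rw [Dkdv, ContinuousLinearMap.proj_pi]
  fin_cases i
  · exact hasFDerivAt_apply 0 a
  · exact hasFDerivAt_apply 1 a
  · exact hasFDerivAt_apply 2 a
  · exact hasFDerivAt_apply 3 a
  · exact hasFDerivAt_apply 4 a
  · have h3 := hasFDerivAt_apply (𝕜 := ℝ) 3 a
    have h4 := hasFDerivAt_apply (𝕜 := ℝ) 4 a
    have h8 := hasFDerivAt_apply (𝕜 := ℝ) 8 a
    have H := ((h4.const_mul (1/2 : ℝ)).sub ((h3.mul h3).const_mul 3)).add h8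
    have efun : (fun x : Fin 12 → ℝ => 1/2 * x 4 - 3 * (x 3 * x 3) + x 8)
        = fun x : Fin 12 → ℝ => (1/2) * x 4 - 3 * x 3 ^ 2 + x 8 := by
      funext v; ring
    have H' : HasFDerivAt (fun x : Fin 12 → ℝ => 1/2 * x 4 - 3 * (x 3 * x 3) + x 8) _ a := H
    rw [efun] at H'
    exact H'
  · exact (hasFDerivAt_apply (𝕜 := ℝ) 3 a).const_mul (1/2 : ℝ)
  · exact (hasFDerivAt_apply (𝕜 := ℝ) 5 a).neg
  · exact hasFDerivAt_const 0 a
  · exact hasFDerivAt_const 0 a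

/-- The affine constraints cutting out the image submanifold, as a linear map. -/
def Skdv : (Fin 10 → ℝ) →ₗ[ℝ] (Fin 3 → ℝ) :=
  LinearMap.pi
    (![LinearMap.proj 6 - (1/2 : ℝ) • LinearMap.proj 3, LinearMap.proj 8, LinearMap.proj 9] :
      Fin 3 → (Fin 10 → ℝ) →ₗ[ℝ] ℝ)

theorem mem_ker_Skdv (w : Fin 10 → ℝ) :
    w ∈ LinearMap.ker Skdv ↔ w 6 = (1/2) * w 3 ∧ w 8 = 0 ∧ w 9 = 0 := by
  rw [LinearMap.mem_ker]
  constructor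
  · intro h
    have h0 : w 6 - (1/2) * w 3 = 0 := congrFun h 0
    have h1 : w 8 = (0 : ℝ) := congrFun h 1
    have h2 : w 9 = (0 : ℝ) := congrFun h 2
    exact ⟨by linarith, h1, h2⟩
  · rintro ⟨e1, e2, e3⟩
    funext j
    fin_cases j
    · show w 6 - (1/2) * w 3 = 0
      rw [e1]; ring
    · exact e2
    · exact e3

theorem Skdv_surj : Function.Surjective Skdv := by
  intro y
  refine ⟨![0, 0, 0, 0, 0, 0, y 0, 0, y 1, y 2], ?_⟩
  funext j
  fin_cases j
  · show y 0 - (1/2) * 0 = y 0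
    ring
  · rfl
  · rfl

theorem finrank_ker_Skdv : Module.finrank ℝ (LinearMap.ker Skdv) = 7 := by
  have h := LinearMap.finrank_range_add_finrank_ker Skdv
  rw [LinearMap.range_eq_top.mpr Skdv_surj, finrank_top,
    Module.finrank_fin_fun, Module.finrank_fin_fun] at h
  omega

theorem range_Dkdv (a : Fin 12 → ℝ) :
    LinearMap.range (Dkdv a : (Fin 12 → ℝ) →ₗ[ℝ] (Fin 10 → ℝ)) = LinearMap.ker Skdv := by
  ext w
  rw [mem_ker_Skdv, LinearMap.mem_range]
  constructor
  · rintro ⟨h, rfl⟩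
    exact ⟨rfl, rfl, rfl⟩
  · rintro ⟨e1, e2, e3⟩
    refine ⟨![w 0, w 1, w 2, w 3, w 4, -(w 7), 0, 0,
        w 5 - (1/2) * w 4 + 3 * (a 3 * w 3 + a 3 * w 3), 0, 0, 0], ?_⟩
    funext j
    fin_cases j
    · rfl
    · rfl
    · rfl
    · rfl
    · rfl
    · show (1/2) * w 4 - 3 * (a 3 * w 3 + a 3 * w 3)
          + (w 5 - (1/2) * w 4 + 3 * (a 3 * w 3 + a 3 * w 3)) = w 5
      ring
    · show (1/2) * w 3 = w 6
      rw [e1]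
    · show -(-(w 7)) = w 7
      ring
    · exact e2.symm
    · exact e3.symm

/-- (a) the Fréchet derivative of `FLkdv` has rank exactly 7 at every
point, so `FLkdv` is nowhere a submersion (the KdV Lagrangian is singular); (b) the image
of `FLkdv` is the submanifold `{p² = ½u₁, p¹¹ = 0, p⁰² = 0}`. -/
theorem statement15 :
    (∀ a : Fin 12 → ℝ,
      Module.finrank ℝ ↥(LinearMap.range ((fderiv ℝ FLkdv a : (Fin 12 → ℝ) →ₗ[ℝ] (Fin 10 → ℝ)))) = 7) ∧
    (∀ a : Fin 12 → ℝ, ¬ Function.Surjective ⇑(fderiv ℝ FLkdv a)) ∧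
    Set.range FLkdv
      = {w : Fin 10 → ℝ | w 6 = (1 / 2) * w 3 ∧ w 8 = 0 ∧ w 9 = 0} := by
  have hrank : ∀ a : Fin 12 → ℝ,
      Module.finrank ℝ ↥(LinearMap.range ((fderiv ℝ FLkdv a : (Fin 12 → ℝ) →ₗ[ℝ] (Fin 10 → ℝ)))) = 7 := by
    intro a
    rw [(hasFDerivAt_FLkdv a).fderiv, range_Dkdv, finrank_ker_Skdv]
  refine ⟨hrank, fun a hs => ?_, ?_⟩
  · have h7 := hrank a
    rw [LinearMap.range_eq_top.mpr hs, finrank_top, Module.finrank_fin_fun] at h7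
    omega
  · ext w
    constructor
    · rintro ⟨v, rfl⟩
      exact ⟨rfl, rfl, rfl⟩
    · rintro ⟨e1, e2, e3⟩
      refine ⟨![w 0, w 1, w 2, w 3, w 4, -(w 7), 0, 0,
          w 5 - (1/2) * w 4 + 3 * w 3 ^ 2, 0, 0, 0], ?_⟩
      funext j
      fin_cases j
      · rfl
      · rfl
      · rfl
      · rfl
      · rfl
      · show (1/2) * w 4 - 3 * w 3 ^ 2 + (w 5 - (1/2) * w 4 + 3 * w 3 ^ 2) = w 5
        ring
      · show (1/2) * w 3 = w 6
        rw [e1]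
      · show -(-(w 7)) = w 7
        ring
      · exact e2.symm
      · exact e3.symm
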